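/- Let α > 0 and c₀, C₀ > 0. There exist constants c, C > 0 depending only on α, c₀, C₀ such that the following holds. Let N₁, N₂ > 0 with N₂ ≤ N₁, and let ξ₁, ξ₂, η₁, η₂ ∈ ℝ with ξ₁, ξ₂, ξ₁+ξ₂ nonzero, N₁/8 ≤ |ξ₁| ≤ 8N₁, N₁/8 ≤ |ξ₁+ξ₂| ≤ 8N₁, and N₂/8 ≤ |ξ₂| ≤ 8N₂. Assume c₀ N₁^α N₂ ≤ | |ξ₁+ξ₂|^α(ξ₁+ξ₂) - |ξ₁|^α ξ₁ - |ξ₂|^α ξ₂ | ≤ C₀ N₁^α N₂ and that |Ω_α(ξ₁,ξ₂,η₁,η₂)| ≤ (c₀/2) N₁^α N₂ (resonant case). Then c N₁^{α/2+1} N₂ ≤ |η₁ ξ₂ - η₂ ξ₁| ≤ C N₁^{α/2+1} N₂. -/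

import Mathlib

/-- Dispersive part of the resonance function. -/
noncomputable def Omega1 (α ξ₁ ξ₂ : ℝ) : ℝ :=
  |ξ₁ + ξ₂| ^ α * (ξ₁ + ξ₂) - |ξ₁| ^ α * ξ₁ - |ξ₂| ^ α * ξ₂

/-- Full resonance function of the fractional KP-I equation. -/
noncomputable def Omega (α ξ₁ ξ₂ η₁ η₂ : ℝ) : ℝ :=
  Omega1 α ξ₁ ξ₂ - (η₁ * ξ₂ - η₂ * ξ₁) ^ 2 / (ξ₁ * ξ₂ * (ξ₁ + ξ₂))

lemma sqrt_rpow_aux (x : ℝ) (hx : 0 ≤ x) (β : ℝ) :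
    Real.sqrt (x ^ β) = x ^ (β / 2) := by
  rw [Real.sqrt_eq_rpow, ← Real.rpow_mul hx]
  ring_nf

/-- in the resonant case, the cross term `|η₁ξ₂ - η₂ξ₁|` is comparable
to `N₁^{α/2+1} N₂`. -/
theorem statement4 (α c₀ C₀ : ℝ) (hα : 0 < α) (hc₀ : 0 < c₀) (hC₀ : 0 < C₀) :
    ∃ c C : ℝ, 0 < c ∧ 0 < C ∧
      ∀ N₁ N₂ ξ₁ ξ₂ η₁ η₂ : ℝ, 0 < N₂ → N₂ ≤ N₁ →
        ξ₁ ≠ 0 → ξ₂ ≠ 0 → ξ₁ + ξ₂ ≠ 0 →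
        N₁ / 8 ≤ |ξ₁| → |ξ₁| ≤ 8 * N₁ →
        N₁ / 8 ≤ |ξ₁ + ξ₂| → |ξ₁ + ξ₂| ≤ 8 * N₁ →
        N₂ / 8 ≤ |ξ₂| → |ξ₂| ≤ 8 * N₂ →
        c₀ * N₁ ^ α * N₂ ≤ |Omega1 α ξ₁ ξ₂| →
        |Omega1 α ξ₁ ξ₂| ≤ C₀ * N₁ ^ α * N₂ →
        |Omega α ξ₁ ξ₂ η₁ η₂| ≤ c₀ / 2 * (N₁ ^ α * N₂) →
        c * N₁ ^ (α / 2 + 1) * N₂ ≤ |η₁ * ξ₂ - η₂ * ξ₁| ∧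
          |η₁ * ξ₂ - η₂ * ξ₁| ≤ C * N₁ ^ (α / 2 + 1) * N₂ := by
  refine ⟨Real.sqrt (c₀ / 1024), Real.sqrt (512 * (C₀ + c₀ / 2)),
    Real.sqrt_pos.2 (by linarith), Real.sqrt_pos.2 (by linarith), ?_⟩
  intro N₁ N₂ ξ₁ ξ₂ η₁ η₂ hN₂ hN₁₂ hξ₁ hξ₂ hξ₁₂ h1l h1u h3l h3u h2l h2u hΩ1l hΩ1u hΩ
  have hN₁ : 0 < N₁ := lt_of_lt_of_le hN₂ hN₁₂
  set K : ℝ := (η₁ * ξ₂ - η₂ * ξ₁) ^ 2 with hK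
  set D : ℝ := ξ₁ * ξ₂ * (ξ₁ + ξ₂) with hD
  have hDne : D ≠ 0 := by
    simp [hD, mul_ne_zero, hξ₁, hξ₂, hξ₁₂]
  have hKD : K / D = Omega1 α ξ₁ ξ₂ - Omega α ξ₁ ξ₂ η₁ η₂ := by
    simp [Omega]
    rfl
  have habs : |K / D| = K / |D| := by
    rw [abs_div, abs_of_nonneg (sq_nonneg _)]
  have hDpos : 0 < |D| := abs_pos.2 hDne
  have hKeq : K = |K / D| * |D| := by
    rw [habs]; field_simp
  have h1 : c₀ / 2 * (N₁ ^ α * N₂) ≤ |K / D| := by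
    have := abs_sub_abs_le_abs_sub (Omega1 α ξ₁ ξ₂) (Omega α ξ₁ ξ₂ η₁ η₂)
    rw [hKD]; nlinarith [abs_nonneg (Omega α ξ₁ ξ₂ η₁ η₂)]
  have h2 : |K / D| ≤ (C₀ + c₀ / 2) * (N₁ ^ α * N₂) := by
    rw [hKD]
    have := abs_sub (Omega1 α ξ₁ ξ₂) (Omega α ξ₁ ξ₂ η₁ η₂)
    nlinarith
  have hDabs : |D| = |ξ₁| * |ξ₂| * |ξ₁ + ξ₂| := by
    rw [hD, abs_mul, abs_mul]
  have hDlow : N₁ ^ 2 * N₂ / 512 ≤ |D| := by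
    rw [hDabs]
    have := mul_le_mul (mul_le_mul h1l h2l (by positivity) (abs_nonneg _)) h3l
      (by positivity) (by positivity)
    linarith
  have hDhigh : |D| ≤ 512 * (N₁ ^ 2 * N₂) := by
    rw [hDabs]
    have := mul_le_mul (mul_le_mul h1u h2u (abs_nonneg _) (by positivity)) h3u
      (abs_nonneg _) (by positivity)
    linarith
  have hMpos : 0 < N₁ ^ α * N₂ := by positivity
  have hrpow : N₁ ^ (α + 2) = N₁ ^ α * N₁ ^ 2 := by
    rw [Real.rpow_add hN₁, Real.rpow_two]
  have hKlow : c₀ / 1024 * (N₁ ^ (α + 2) * N₂ ^ 2) ≤ K := by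
    rw [hKeq, hrpow]
    have := mul_le_mul h1 hDlow (by positivity) (abs_nonneg _)
    linarith
  have hKhigh : K ≤ 512 * (C₀ + c₀ / 2) * (N₁ ^ (α + 2) * N₂ ^ 2) := by
    rw [hKeq, hrpow]
    have := mul_le_mul h2 hDhigh (abs_nonneg _) (by positivity)
    linarith
  have hcross : |η₁ * ξ₂ - η₂ * ξ₁| = Real.sqrt K := by
    rw [hK, Real.sqrt_sq_eq_abs]
  have hsqrtN : Real.sqrt (N₁ ^ (α + 2) * N₂ ^ 2) = N₁ ^ (α / 2 + 1) * N₂ := by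
    rw [Real.sqrt_mul (by positivity), sqrt_rpow_aux N₁ hN₁.le,
      Real.sqrt_sq hN₂.le]
    ring_nf
  constructor
  · rw [hcross]
    calc Real.sqrt (c₀ / 1024) * N₁ ^ (α / 2 + 1) * N₂
        = Real.sqrt (c₀ / 1024) * Real.sqrt (N₁ ^ (α + 2) * N₂ ^ 2) := by
          rw [hsqrtN]; ring
      _ = Real.sqrt (c₀ / 1024 * (N₁ ^ (α + 2) * N₂ ^ 2)) :=
          (Real.sqrt_mul (by positivity) _).symm
      _ ≤ Real.sqrt K := Real.sqrt_le_sqrt hKlow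
  · rw [hcross]
    calc Real.sqrt K ≤ Real.sqrt (512 * (C₀ + c₀ / 2) * (N₁ ^ (α + 2) * N₂ ^ 2)) :=
          Real.sqrt_le_sqrt hKhigh
      _ = Real.sqrt (512 * (C₀ + c₀ / 2)) * Real.sqrt (N₁ ^ (α + 2) * N₂ ^ 2) :=
          Real.sqrt_mul (by positivity) _
      _ = Real.sqrt (512 * (C₀ + c₀ / 2)) * N₁ ^ (α / 2 + 1) * N₂ := by
          rw [hsqrtN]; ring
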